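/- Let a, b, c, d be four distinct points in ℝ² such that the open segments ab and cd cross and the segment ab is perpendicular to the segment cd. Let μ'' be the minimum distance between any pair of points in {a, b, c, d}. Then (|ab| + |cd|) − (|ad| + |cb|) ≥ ((2−√2)/2)·μ''. -/
import Mathlib


open EuclideanGeometry Real

noncomputable section

/-- Points of the Euclidean plane. -/
abbrev Pt : Type := EuclideanSpace ℝ (Fin 2)

lemma sqle_aux (E R : ℝ) (hE : 0 ≤ E) (hR : 0 ≤ R) (h : E^2 ≤ R^2) : E ≤ R := by
  have := Real.sqrt_le_sqrt h
  rwa [Real.sqrt_sq hE, Real.sqrt_sq hR] at this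

lemma two_lemma (x y E : ℝ) (hx : 0 < x) (hxy : x ≤ y) (hE : 0 ≤ E)
    (hE2 : E^2 = x^2 + y^2) : x + y - E ≥ (2 - Real.sqrt 2) * x := by
  have h2 : Real.sqrt 2 ^ 2 = 2 := Real.sq_sqrt (by norm_num)
  have h1 : 1 ≤ Real.sqrt 2 := by nlinarith [Real.sqrt_nonneg 2]
  have hR : 0 ≤ y + (Real.sqrt 2 - 1) * x := by nlinarith
  have hle : E ≤ y + (Real.sqrt 2 - 1) * x := by
    apply sqle_aux _ _ hE hR
    nlinarith [mul_nonneg (by linarith : (0:ℝ) ≤ Real.sqrt 2 - 1)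
      (by nlinarith : (0:ℝ) ≤ x*y - x*x)]
  linarith

lemma two_lemma' (x y E : ℝ) (hx : 0 < x) (hy : 0 < y) (hE : 0 ≤ E)
    (hE2 : E^2 = x^2 + y^2) : x + y - E ≥ (2 - Real.sqrt 2) * min x y := by
  rcases le_total x y with h | h
  · rw [min_eq_left h]; exact two_lemma x y E hx h hE hE2
  · rw [min_eq_right h]
    have := two_lemma y x E hy h hE (by linarith)
    linarith

lemma sum_lemma (x y E : ℝ) (hx : 0 ≤ x) (hy : 0 ≤ y) (hE : 0 ≤ E)
    (hE2 : E^2 = x^2 + y^2) : E ≤ x + y := by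
  apply sqle_aux _ _ hE (by linarith); nlinarith

lemma main_real (s t u v AD CB AC BD M : ℝ)
    (hs : 0 < s) (ht : 0 < t) (hu : 0 < u) (hv : 0 < v)
    (hAD : 0 ≤ AD) (hCB : 0 ≤ CB) (hAC : 0 ≤ AC) (hBD : 0 ≤ BD)
    (hAD2 : AD^2 = s^2 + v^2) (hCB2 : CB^2 = t^2 + u^2)
    (hAC2 : AC^2 = s^2 + u^2) (hBD2 : BD^2 = t^2 + v^2)
    (hM0 : 0 ≤ M) (hM1 : M ≤ s + t) (hM2 : M ≤ AC) (hM5 : M ≤ BD) (hM6 : M ≤ u + v) :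
    (s + t) + (u + v) - (AD + CB) ≥ (2 - Real.sqrt 2) / 2 * M := by
  have h2 : Real.sqrt 2 ^ 2 = 2 := Real.sq_sqrt (by norm_num)
  have h1 : 1 ≤ Real.sqrt 2 := by nlinarith [Real.sqrt_nonneg 2]
  have h3 : Real.sqrt 2 ≤ 2 := by nlinarith [Real.sqrt_nonneg 2]
  have T1 := two_lemma' s v AD hs hv hAD hAD2
  have T2 := two_lemma' t u CB ht hu hCB hCB2
  have hsum : M ≤ min s v + min t u := by
    rcases le_total s v with h | h <;> rcases le_total t u with h' | h'
    · rw [min_eq_left h, min_eq_left h']; linarith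
    · rw [min_eq_left h, min_eq_right h']
      have := sum_lemma s u AC hs.le hu.le hAC hAC2; linarith
    · rw [min_eq_right h, min_eq_left h']
      have := sum_lemma t v BD ht.le hv.le hBD hBD2; linarith
    · rw [min_eq_right h, min_eq_right h']; linarith
  nlinarith [mul_nonneg (by linarith : (0:ℝ) ≤ 2 - Real.sqrt 2) hM0]

/-- If the open segments `ab` and `cd` (on four distinct points) cross
and are perpendicular, and `μ''` is the minimum pairwise distance among `{a, b, c, d}`,
then `(|ab| + |cd|) - (|ad| + |cb|) ≥ ((2 - √2)/2)·μ''`. -/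
theorem stmt3 (a b c d : Pt)
    (hab : a ≠ b) (hac : a ≠ c) (had : a ≠ d) (hbc : b ≠ c) (hbd : b ≠ d) (hcd : c ≠ d)
    (hcross : (openSegment ℝ a b ∩ openSegment ℝ c d).Nonempty)
    (hperp : inner (𝕜 := ℝ) (b - a) (d - c) = 0)
    (μ'' : ℝ)
    (hμ : μ'' = min (dist a b) (min (dist a c) (min (dist a d)
            (min (dist b c) (min (dist b d) (dist c d)))))) :
    (dist a b + dist c d) - (dist a d + dist c b) ≥ (2 - Real.sqrt 2) / 2 * μ'' := by
  obtain ⟨p, hp1, hp2⟩ := hcross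
  rw [openSegment_eq_image] at hp1 hp2
  obtain ⟨θ, ⟨hθ0, hθ1⟩, hpθ⟩ := hp1
  obtain ⟨φ, ⟨hφ0, hφ1⟩, hpφ⟩ := hp2
  simp only at hpθ hpφ
  have heq : (1 - θ) • a + θ • b = (1 - φ) • c + φ • d := hpθ.trans hpφ.symm
  have key : ∀ (α β : ℝ), ‖α • (b - a) + β • (d - c)‖^2
      = (α * ‖b - a‖)^2 + (β * ‖d - c‖)^2 := by
    intro α β
    rw [norm_add_sq_real, real_inner_smul_left, real_inner_smul_right, hperp,
      norm_smul, norm_smul]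
    simp only [Real.norm_eq_abs, mul_pow, sq_abs]
    ring
  set s : ℝ := θ * ‖b - a‖ with hsdef
  set t : ℝ := (1 - θ) * ‖b - a‖ with htdef
  set u : ℝ := φ * ‖d - c‖ with hudef
  set v : ℝ := (1 - φ) * ‖d - c‖ with hvdef
  have hB : 0 < ‖b - a‖ := norm_sub_pos_iff.mpr hab.symm
  have hD : 0 < ‖d - c‖ := norm_sub_pos_iff.mpr hcd.symm
  have hs : 0 < s := mul_pos hθ0 hB
  have ht : 0 < t := mul_pos (by linarith) hB
  have hu : 0 < u := mul_pos hφ0 hD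
  have hv : 0 < v := mul_pos (by linarith) hD
  have dab : dist a b = s + t := by rw [dist_eq_norm']; ring
  have dcd : dist c d = u + v := by rw [dist_eq_norm']; ring
  have hvad : a - d = (-θ) • (b - a) + (-(1 - φ)) • (d - c) := by
    linear_combination (norm := module) heq
  have hvcb : c - b = (-(1 - θ)) • (b - a) + (-φ) • (d - c) := by
    linear_combination (norm := module) -heq
  have hvac : a - c = (-θ) • (b - a) + φ • (d - c) := by
    linear_combination (norm := module) heq
  have hvbd : b - d = (1 - θ) • (b - a) + (-(1 - φ)) • (d - c) := by
    linear_combination (norm := module) heq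
  have had2 : dist a d ^ 2 = s^2 + v^2 := by
    rw [dist_eq_norm, hvad, key]; ring
  have hcb2 : dist c b ^ 2 = t^2 + u^2 := by
    rw [dist_eq_norm, hvcb, key]; ring
  have hac2 : dist a c ^ 2 = s^2 + u^2 := by
    rw [dist_eq_norm, hvac, key]; ring
  have hbd2 : dist b d ^ 2 = t^2 + v^2 := by
    rw [dist_eq_norm, hvbd, key]; ring
  have hM0 : 0 ≤ μ'' := by
    rw [hμ]
    exact le_min dist_nonneg (le_min dist_nonneg (le_min dist_nonneg
      (le_min dist_nonneg (le_min dist_nonneg dist_nonneg))))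
  have hM1 : μ'' ≤ dist a b := hμ ▸ min_le_left _ _
  have hM2 : μ'' ≤ dist a c :=
    hμ ▸ le_trans (min_le_right _ _) (min_le_left _ _)
  have hM5 : μ'' ≤ dist b d :=
    hμ ▸ le_trans (min_le_right _ _) (le_trans (min_le_right _ _)
      (le_trans (min_le_right _ _) (le_trans (min_le_right _ _) (min_le_left _ _))))
  have hM6 : μ'' ≤ dist c d :=
    hμ ▸ le_trans (min_le_right _ _) (le_trans (min_le_right _ _)
      (le_trans (min_le_right _ _) (le_trans (min_le_right _ _) (min_le_right _ _))))
  rw [dab, dcd]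
  exact main_real s t u v (dist a d) (dist c b) (dist a c) (dist b d) μ''
    hs ht hu hv dist_nonneg dist_nonneg dist_nonneg dist_nonneg
    had2 hcb2 hac2 hbd2 hM0 (dab ▸ hM1) hM2 hM5 (dcd ▸ hM6)
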